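/- Let X be a set with ternary operation [ ] satisfying LN, and p, k ≥ 0. With Cₙ^{(p,k),D} the degenerate submodule (generated by tuples with a degenerate consecutive triple at positions i, i+1, i+2 for some p ≤ i ≤ n−1−k), the truncated right differential ∂ₙ^{(p,k),R} = Σ_{i=p}^{n−k} (−1)ⁱ dᵢⁿ'ᴿ maps Cₙ^{(p,k),D} into Cₙ₋₁^{(p,k),D}. -/

import Mathlib

universe u
variable {X : Type u}

open Fin.NatCast in
/-- Substitution: replace the `i`-th entry `xᵢ` of the tuple by `[xᵢ₋₁ xᵢ xᵢ₊₁]`. -/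
def subst (t : X → X → X → X) (n i : ℕ) (x : Fin (n + 2) → X) : Fin (n + 2) → X :=
  Function.update x (i : Fin (n + 2))
    (t (x ((i : Fin (n + 2)) - 1)) (x (i : Fin (n + 2))) (x ((i : Fin (n + 2)) + 1)))

/-- Left face maps `dᵢⁿ'ᴸ` on tuples. -/
def dL (t : X → X → X → X) (n : ℕ) : ℕ → (Fin (n + 2) → X) → (Fin (n + 1) → X)
  | 0, x => fun j => x j.succ
  | i + 1, x => dL t n i (subst t n (i + 1) x)

/-- Auxiliary for right face maps: `dRa t n m = d_{n-m}ⁿ'ᴿ`. -/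
def dRa (t : X → X → X → X) (n : ℕ) : ℕ → (Fin (n + 2) → X) → (Fin (n + 1) → X)
  | 0, x => fun j => x j.castSucc
  | m + 1, x => dRa t n m (subst t n (n - m) x)

/-- Right face maps `dᵢⁿ'ᴿ` on tuples. -/
def dR (t : X → X → X → X) (n i : ℕ) : (Fin (n + 2) → X) → (Fin (n + 1) → X) :=
  dRa t n (n - i)

/-- Left face maps on the free module `Cₙ = R⟨X^{n+2}⟩`. -/
noncomputable def dLhat (R : Type*) [CommRing R] (t : X → X → X → X) (n i : ℕ) :
    ((Fin (n + 2) → X) →₀ R) →ₗ[R] ((Fin (n + 1) → X) →₀ R) :=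
  Finsupp.lmapDomain R R (dL t n i)

/-- Right face maps on the free module `Cₙ = R⟨X^{n+2}⟩`. -/
noncomputable def dRhat (R : Type*) [CommRing R] (t : X → X → X → X) (n i : ℕ) :
    ((Fin (n + 2) → X) →₀ R) →ₗ[R] ((Fin (n + 1) → X) →₀ R) :=
  Finsupp.lmapDomain R R (dR t n i)

open Fin.NatCast in
/-- The `(p,k)`-degenerate submodule `Cₙ^{(p,k),D}`: spanned by tuples with a
degenerate consecutive triple at positions `i, i+1, i+2` for some `p ≤ i`
with `i + 2 ≤ n + 1 − k`. -/
noncomputable def Cdeg (R : Type*) [CommRing R] (t : X → X → X → X) (p k n : ℕ) :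
    Submodule R ((Fin (n + 2) → X) →₀ R) :=
  Submodule.span R {f | ∃ x : Fin (n + 2) → X, ∃ i : ℕ, p ≤ i ∧ i + 2 + k ≤ n + 1 ∧
    x (↑(i + 1)) = t (x ↑i) (x ↑(i + 1)) (x ↑(i + 2)) ∧ f = Finsupp.single x 1}

open Fin.NatCast

lemma subst_apply_ne (t : X → X → X → X) (n i : ℕ) (x : Fin (n + 2) → X)
    (j : Fin (n + 2)) (h : j ≠ (i : Fin (n + 2))) : subst t n i x j = x j :=
  Function.update_of_ne h _ _


lemma natCast_sub_one {N : ℕ} (q : ℕ) (hq : 1 ≤ q) :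
    (q : Fin (N + 1)) - 1 = ((q - 1 : ℕ) : Fin (N + 1)) := by
  obtain ⟨r, rfl⟩ : ∃ r, q = r + 1 := ⟨q - 1, by omega⟩
  rw [Nat.cast_add, Nat.cast_one, add_sub_cancel_right, Nat.add_sub_cancel]

lemma natCast_add_one {N : ℕ} (q : ℕ) :
    (q : Fin (N + 1)) + 1 = ((q + 1 : ℕ) : Fin (N + 1)) := by
  rw [Nat.cast_add, Nat.cast_one]

lemma dRa_low (t : X → X → X → X) (n : ℕ) :
    ∀ m (x : Fin (n + 2) → X) (j : Fin (n + 1)), (j : ℕ) + m ≤ n →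
      dRa t n m x j = x j.castSucc := by
  intro m
  induction m with
  | zero => intro x j _; rfl
  | succ m ih =>
    intro x j hj
    show dRa t n m (subst t n (n - m) x) j = _
    rw [ih _ j (by omega), subst_apply_ne]
    intro h
    have : ((j.castSucc : Fin (n + 2)) : ℕ) = ((n - m : ℕ) : Fin (n + 2)) := by rw [h]
    rw [Fin.coe_castSucc, Fin.val_natCast, Nat.mod_eq_of_lt (by omega)] at this
    omega

lemma dRa_high (t : X → X → X → X) (n : ℕ) :
    ∀ m (x : Fin (n + 2) → X) (q : ℕ), n - m < q → q ≤ n →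
      dRa t n m x (q : Fin (n + 1)) =
        t (dRa t n m x ((q - 1 : ℕ) : Fin (n + 1))) (x (q : Fin (n + 2)))
          (x ((q + 1 : ℕ) : Fin (n + 2))) := by
  intro m
  induction m with
  | zero => intro x q h1 h2; omega
  | succ m ih =>
    intro x q h1 h2
    show dRa t n m (subst t n (n - m) x) _ = _
    rcases Nat.lt_or_ge (n - m) q with hq | hq
    · rw [ih _ q hq h2, subst_apply_ne, subst_apply_ne]
      · rfl
      · intro h
        have : ((q + 1 : ℕ) : Fin (n + 2)) = ((n - m : ℕ) : Fin (n + 2)) := h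
        have := congrArg Fin.val this
        rw [Fin.val_natCast, Fin.val_natCast, Nat.mod_eq_of_lt (by omega),
          Nat.mod_eq_of_lt (by omega)] at this
        omega
      · intro h
        have := congrArg Fin.val h
        rw [Fin.val_natCast, Fin.val_natCast, Nat.mod_eq_of_lt (by omega),
          Nat.mod_eq_of_lt (by omega)] at this
        omega
    · -- q = n - m
      have hqe : q = n - m := by omega
      have hq1 : 1 <= q := by omega
      have e0 : forall y : Fin (n + 2) -> X, dRa t n (m + 1) y = dRa t n m (subst t n (n - m) y) :=
        fun _ => rfl
      rw [e0, show (n - m) = q from hqe.symm]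
      have hcast : forall a : Nat, a <= n -> ((a : Fin (n + 1)).castSucc : Fin (n + 2)) = (a : Fin (n + 2)) := by
        intro a ha
        apply Fin.ext
        rw [Fin.coe_castSucc, Fin.val_natCast, Fin.val_natCast,
          Nat.mod_eq_of_lt (by omega), Nat.mod_eq_of_lt (by omega)]
      have e1 : dRa t n m (subst t n q x) (q : Fin (n + 1)) =
          (subst t n q x) ((q : Fin (n + 1)).castSucc) := by
        apply dRa_low
        have : ((q : Fin (n + 1)) : Nat) = q := by
          rw [Fin.val_natCast, Nat.mod_eq_of_lt (by omega)]
        omega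
      have e2 : dRa t n m (subst t n q x) ((q - 1 : Nat) : Fin (n + 1)) =
          (subst t n q x) (((q - 1 : Nat) : Fin (n + 1)).castSucc) := by
        apply dRa_low
        have : (((q - 1 : Nat) : Fin (n + 1)) : Nat) = q - 1 := by
          rw [Fin.val_natCast, Nat.mod_eq_of_lt (by omega)]
        omega
      rw [e1, e2, hcast q h2, hcast (q - 1) (by omega)]
      have hsub1 : (subst t n q x) ((q - 1 : Nat) : Fin (n + 2)) =
          x ((q - 1 : Nat) : Fin (n + 2)) := by
        apply subst_apply_ne
        intro h
        have := congrArg Fin.val h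
        rw [Fin.val_natCast, Fin.val_natCast, Nat.mod_eq_of_lt (by omega),
          Nat.mod_eq_of_lt (by omega)] at this
        omega
      rw [hsub1]
      show Function.update x _ _ _ = _
      rw [Function.update_self, natCast_sub_one q hq1, natCast_add_one]

lemma dR_apply_low (t : X → X → X → X) (n i : ℕ) (x : Fin (n + 2) → X)
    (j : Fin (n + 1)) (h : (j : ℕ) ≤ i) (hi : i ≤ n) :
    dR t n i x j = x j.castSucc := by
  apply dRa_low
  omega

lemma dR_apply_high (t : X → X → X → X) (n i : ℕ) (x : Fin (n + 2) → X)
    (q : ℕ) (h1 : i < q) (h2 : q ≤ n) :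
    dR t n i x (q : Fin (n + 1)) =
      t (dR t n i x ((q - 1 : ℕ) : Fin (n + 1))) (x (q : Fin (n + 2)))
        (x ((q + 1 : ℕ) : Fin (n + 2))) := by
  apply dRa_high
  · omega
  · exact h2

lemma dR_succ_eq_of_deg (t : X → X → X → X) (n i : ℕ) (x : Fin (n + 2) → X)
    (hi : i + 1 ≤ n)
    (hdeg : x (↑(i + 1)) = t (x ↑i) (x ↑(i + 1)) (x ↑(i + 2))) :
    dR t n (i + 1) x = dR t n i x := by
  have h1 : n - i = (n - (i + 1)) + 1 := by omega
  have h2 : n - (n - (i + 1)) = i + 1 := by omega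
  have hsubst : subst t n (i + 1) x = x := by
    show Function.update x _ _ = x
    rw [natCast_sub_one (N := n + 1) (i + 1) (by omega),
      natCast_add_one (N := n + 1) (i + 1), Nat.add_sub_cancel]
    rw [show i + 1 + 1 = i + 2 from rfl, <- hdeg, Function.update_eq_self]
  show dRa t n (n - (i + 1)) x = dRa t n (n - i) x
  rw [h1]
  show _ = dRa t n (n - (i + 1)) (subst t n (n - (n - (i + 1))) x)
  rw [h2, hsubst]

/-- If the ternary operation satisfies LN, the truncated right
differential `∂ₙ^{(p,k),R} = Σ_{i=p}^{n−k} (−1)ⁱ dᵢⁿ'ᴿ` maps the degenerate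
submodule `Cₙ^{(p,k),D}` into `Cₙ₋₁^{(p,k),D}`. -/
theorem stmt11 (R : Type*) [CommRing R] (t : X → X → X → X)
    (hLN : ∀ a b c d, t a b (t b c d) = t a (t a b c) (t (t a b c) c d))
    (p k : ℕ) :
    ∀ n : ℕ,
      (Cdeg R t p k (n + 1)).map
          (∑ i ∈ Finset.Icc p (n + 1),
            if i + k ≤ n + 1 then ((-1 : R) ^ i) • dRhat R t (n + 1) i else 0)
        ≤ Cdeg R t p k n := by
  intro n
  rw [Cdeg, Cdeg, Submodule.map_span_le]
  rintro f ⟨x, i, hpi, hik, hdeg, rfl⟩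
  have happ : (∑ j ∈ Finset.Icc p (n + 1),
      if j + k ≤ n + 1 then ((-1 : R) ^ j) • dRhat R t (n + 1) j else 0)
      (Finsupp.single x 1)
      = ∑ j ∈ Finset.Icc p (n + 1),
        (if j + k ≤ n + 1 then ((-1 : R) ^ j) • Finsupp.single (dR t (n + 1) j x) (1 : R)
          else 0) := by
    rw [LinearMap.sum_apply]
    refine Finset.sum_congr rfl ?_
    intro j _
    split_ifs with h
    · rw [LinearMap.smul_apply, dRhat, Finsupp.lmapDomain_apply, Finsupp.mapDomain_single]
    · rfl
  rw [happ]
  set c : ℕ → ((Fin (n + 2) → X) →₀ R) :=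
    fun j => if j + k ≤ n + 1 then ((-1 : R) ^ j) • Finsupp.single (dR t (n + 1) j x) (1 : R)
      else 0 with hc
  have hii : i ∈ Finset.Icc p (n + 1) := by
    rw [Finset.mem_Icc]; omega
  have hi1 : i + 1 ∈ (Finset.Icc p (n + 1)).erase i := by
    rw [Finset.mem_erase, Finset.mem_Icc]; omega
  have hz : c (i + 1) + c i = 0 := by
    rw [hc]
    simp only []
    rw [if_pos (by omega : i + 1 + k ≤ n + 1), if_pos (by omega : i + k ≤ n + 1)]
    rw [dR_succ_eq_of_deg t (n + 1) i x (by omega) hdeg]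
    rw [show ((-1 : R) ^ (i + 1)) = -((-1 : R) ^ i) from by rw [pow_succ]; ring]
    rw [neg_smul, neg_add_cancel]
  have hsplit : ∑ j ∈ Finset.Icc p (n + 1), c j =
      ∑ j ∈ ((Finset.Icc p (n + 1)).erase i).erase (i + 1), c j := by
    rw [← Finset.sum_erase_add _ _ hii, ← Finset.sum_erase_add _ _ hi1, add_assoc, hz,
      add_zero]
  rw [hsplit]
  refine Submodule.sum_mem _ ?_
  intro j hj
  rw [Finset.mem_erase, Finset.mem_erase, Finset.mem_Icc] at hj
  obtain ⟨hj1, hj2, hj3, hj4⟩ := hj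
  rw [hc]
  simp only []
  split_ifs with hcond
  · refine Submodule.smul_mem _ _ (Submodule.subset_span ?_)
    set y := dR t (n + 1) j x with hy
    rcases Nat.lt_or_ge j i with hlt | hge
    · -- j < i : degenerate at i - 1
      refine ⟨y, i - 1, by omega, by omega, ?_, rfl⟩
      have e1 : i - 1 + 1 = i := by omega
      have e2 : i - 1 + 2 = i + 1 := by omega
      rw [e1, e2]
      have hA := dR_apply_high t (n + 1) j x i (by omega) (by omega)
      have hB := dR_apply_high t (n + 1) j x (i + 1) (by omega) (by omega)
      rw [Nat.add_sub_cancel] at hB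
      rw [show i + 1 + 1 = i + 2 from rfl] at hB
      rw [← hy] at hA hB
      rw [hB, hA, ← hLN, ← hdeg]
    · -- j ≥ i + 2 : degenerate at i
      have hge2 : i + 2 ≤ j := by omega
      refine ⟨y, i, hpi, by omega, ?_, rfl⟩
      have key : ∀ m : ℕ, m ≤ j → y ((m : ℕ) : Fin (n + 2)) = x ((m : ℕ) : Fin (n + 3)) := by
        intro m hm
        have hv : (((m : ℕ) : Fin (n + 2)) : ℕ) = m := by
          rw [Fin.val_natCast, Nat.mod_eq_of_lt (by omega)]
        rw [hy, dR_apply_low t (n + 1) j x _ (by omega) (by omega)]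
        congr 1
        apply Fin.ext
        rw [Fin.coe_castSucc, hv, Fin.val_natCast, Nat.mod_eq_of_lt (by omega)]
      rw [key i (by omega), key (i + 1) (by omega), key (i + 2) (by omega)]
      exact hdeg
  · exact Submodule.zero_mem _
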